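/- Every k-algebra automorphism σ of A_{q,n} factors uniquely as σ = λ ∘ τ, where λ is a k-algebra automorphism of A_{q,n} mapping each x_i into the k-linear span Ω of x_1, …, x_q (a linear automorphism), and τ belongs to the group I_{q,n} of linearly trivial automorphisms. Equivalently, the group homomorphism from the automorphism group of A_{q,n} to GL(m/m²) induced by the action on the cotangent space is surjective, splits, and has kernel I_{q,n}. -/

import Mathlib

set_option synthInstance.maxHeartbeats 400000

noncomputable section

/-- The ring of `n`-nil polynomials `A_{q,n} = k[x_1,…,x_q]/m_0^n`. -/
abbrev Aqn (k : Type) [Field k] (q n : ℕ) : Type :=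
  MvPolynomial (Fin q) k ⧸
    (Ideal.span (Set.range (MvPolynomial.X : Fin q → MvPolynomial (Fin q) k))) ^ n

/-- The image of the variable `x_i` in `A_{q,n}`. -/
def xA (k : Type) [Field k] (q n : ℕ) (i : Fin q) : Aqn k q n :=
  Ideal.Quotient.mk _ (MvPolynomial.X i)

/-- The maximal ideal `m` of `A_{q,n}` generated by `x_1, …, x_q`. -/
def mA (k : Type) [Field k] (q n : ℕ) : Ideal (Aqn k q n) :=
  Ideal.span (Set.range (xA k q n))

/-- The `k`-linear span `Ω` of `x_1, …, x_q` in `A_{q,n}`. -/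
def OmegaA (k : Type) [Field k] (q n : ℕ) : Submodule k (Aqn k q n) :=
  Submodule.span k (Set.range (xA k q n))

namespace Stmt14

open MvPolynomial Pointwise

variable {k : Type} [Field k] {q n : ℕ}

/-- The ideal `m₀ = (x_1, …, x_q)` in the polynomial ring. -/
abbrev m0 (k : Type) [Field k] (q : ℕ) : Ideal (MvPolynomial (Fin q) k) :=
  Ideal.span (Set.range MvPolynomial.X)

lemma mem_m0_iff {p : MvPolynomial (Fin q) k} :
    p ∈ m0 k q ↔ ∀ d ∈ p.support, d ≠ 0 := by
  have hr : (Set.range (X : Fin q → MvPolynomial (Fin q) k)) = X '' Set.univ := by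
    rw [Set.image_univ]
  rw [m0, hr, mem_ideal_span_X_image]
  constructor
  · intro h d hd hd0
    obtain ⟨i, _, hi⟩ := h d hd
    exact hi (by simp [hd0])
  · intro h d hd
    obtain ⟨i, hi⟩ := Finsupp.ne_iff.mp (h d hd)
    exact ⟨i, Set.mem_univ i, by simpa using hi⟩

lemma sum_single_one (i : Fin q) : ((Finsupp.single i 1 : Fin q →₀ ℕ)).sum (fun _ e => e) = 1 :=
  Finsupp.sum_single_index rfl

lemma m0_sq_eq : (m0 k q) ^ 2 =
    Ideal.span ((fun s => monomial s (1 : k)) '' {d : Fin q →₀ ℕ | 2 ≤ d.sum fun _ e => e}) := by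
  rw [pow_two, m0, Ideal.span_mul_span']
  apply le_antisymm
  · rw [Ideal.span_le]
    rintro _ ⟨_, ⟨i, rfl⟩, _, ⟨j, rfl⟩, rfl⟩
    apply Ideal.subset_span
    refine ⟨Finsupp.single i 1 + Finsupp.single j 1, ?_, ?_⟩
    · simp [Set.mem_setOf_eq, Finsupp.sum_add_index', sum_single_one]
    · show (monomial (Finsupp.single i 1 + Finsupp.single j 1)) (1 : k) = X i * X j
      rw [X, X, monomial_mul, one_mul]
  · rw [Ideal.span_le]
    rintro _ ⟨d, hd, rfl⟩
    simp only [Set.mem_setOf_eq] at hd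
    have hd1 : d ≠ 0 := by
      rintro rfl; simp at hd
    obtain ⟨i, hi⟩ := Finsupp.ne_iff.mp hd1
    simp only [Finsupp.coe_zero, Pi.zero_apply] at hi
    set d1 : Fin q →₀ ℕ := d - Finsupp.single i 1 with hd1def
    have hdec : d = Finsupp.single i 1 + d1 :=
      (add_tsub_cancel_of_le (Finsupp.single_le_iff.mpr (Nat.one_le_iff_ne_zero.mpr hi))).symm
    have hsum1 : d1.sum (fun _ e => e) + 1 = d.sum (fun _ e => e) := by
      rw [hdec, Finsupp.sum_add_index' (fun _ => rfl) (fun _ _ _ => rfl), sum_single_one]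
      omega
    have hd1ne : d1 ≠ 0 := by
      intro h0
      rw [h0] at hsum1
      simp at hsum1
      omega
    obtain ⟨j, hj⟩ := Finsupp.ne_iff.mp hd1ne
    simp only [Finsupp.coe_zero, Pi.zero_apply] at hj
    set d2 : Fin q →₀ ℕ := d1 - Finsupp.single j 1 with hd2def
    have hdec2 : d1 = Finsupp.single j 1 + d2 :=
      (add_tsub_cancel_of_le (Finsupp.single_le_iff.mpr (Nat.one_le_iff_ne_zero.mpr hj))).symm
    have : monomial d (1 : k) = (X i * X j) * monomial d2 1 := by
      rw [X, X, monomial_mul, monomial_mul, one_mul, one_mul, hdec, hdec2, add_assoc]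
    show (monomial d) (1 : k) ∈ Ideal.span (Set.range X * Set.range X)
    rw [this]
    exact Ideal.mul_mem_right _ _ (Ideal.subset_span
      (Set.mul_mem_mul ⟨i, rfl⟩ ⟨j, rfl⟩))

lemma degree_mono {a b : Fin q →₀ ℕ} (h : a ≤ b) :
    a.sum (fun _ e => e) ≤ b.sum (fun _ e => e) := by
  rw [Finsupp.sum_fintype _ _ (fun _ => rfl), Finsupp.sum_fintype _ _ (fun _ => rfl)]
  exact Finset.sum_le_sum fun i _ => h i

lemma coeff_eq_zero_of_mem_m0_sq {p : MvPolynomial (Fin q) k} (hp : p ∈ (m0 k q) ^ 2)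
    {d : Fin q →₀ ℕ} (hd : d.sum (fun _ e => e) ≤ 1) : coeff d p = 0 := by
  rw [m0_sq_eq, mem_ideal_span_monomial_image] at hp
  by_contra h
  obtain ⟨si, hsi, hle⟩ := hp d (mem_support_iff.mpr h)
  have := degree_mono hle
  simp only [Set.mem_setOf_eq] at hsi
  omega

lemma mem_m0_sq_of_support {p : MvPolynomial (Fin q) k}
    (h : ∀ d ∈ p.support, 2 ≤ d.sum fun _ e => e) : p ∈ (m0 k q) ^ 2 := by
  rw [m0_sq_eq, mem_ideal_span_monomial_image]
  exact fun d hd => ⟨d, h d hd, le_rfl⟩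

lemma coeff_single_sum (c : Fin q → k) (i : Fin q) :
    coeff (Finsupp.single i 1) (∑ j, c j • X j : MvPolynomial (Fin q) k) = c i := by
  rw [coeff_sum]
  rw [Finset.sum_eq_single i]
  · simp [coeff_smul, coeff_X]
  · intro j _ hji
    simp [coeff_smul, coeff_X', Finsupp.single_left_inj (one_ne_zero (α := ℕ)), hji]
  · simp

lemma small_support {d : Fin q →₀ ℕ} (h : d.sum (fun _ e => e) ≤ 1) :
    d = 0 ∨ ∃ i, d = Finsupp.single i 1 := by
  rw [Finsupp.sum_fintype _ _ (fun _ => rfl)] at h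
  by_cases hd : d = 0
  · exact Or.inl hd
  obtain ⟨i, hi⟩ := Finsupp.ne_iff.mp hd
  simp only [Finsupp.coe_zero, Pi.zero_apply] at hi
  right
  refine ⟨i, ?_⟩
  have hi' : 1 ≤ d i := Nat.one_le_iff_ne_zero.mpr hi
  ext a
  rcases eq_or_ne a i with rfl | ha
  · have e3 : d a ≤ ∑ x, d x :=
      Finset.single_le_sum (f := fun l => d l) (fun _ _ => Nat.zero_le _) (Finset.mem_univ a)
    rw [Finsupp.single_eq_same]
    omega
  · have e1 : d a + ∑ x ∈ Finset.univ.erase a, d x = ∑ x, d x :=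
      Finset.add_sum_erase _ _ (Finset.mem_univ a)
    have e2 : d i ≤ ∑ x ∈ Finset.univ.erase a, d x :=
      Finset.single_le_sum (f := fun l => d l) (fun _ _ => Nat.zero_le _)
        (Finset.mem_erase.mpr ⟨Ne.symm ha, Finset.mem_univ i⟩)
    rw [Finsupp.single_eq_of_ne ha]
    omega

lemma sub_lin_mem {p : MvPolynomial (Fin q) k} (hp : p ∈ m0 k q) :
    (p - ∑ i, coeff (Finsupp.single i 1) p • X i) ∈ (m0 k q) ^ 2 := by
  apply mem_m0_sq_of_support
  intro d hd
  by_contra hlt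
  push_neg at hlt
  have hle : d.sum (fun _ e => e) ≤ 1 := by omega
  have hco : coeff d (p - ∑ i, coeff (Finsupp.single i 1) p • X i) = 0 := by
    rcases small_support hle with rfl | ⟨i, rfl⟩
    · have h0 : coeff 0 p = 0 := by
        by_contra h
        exact (mem_m0_iff.mp hp 0 (mem_support_iff.mpr h)) rfl
      rw [coeff_sub, h0, coeff_sum]
      simp [coeff_smul, coeff_zero_X]
    · rw [coeff_sub, coeff_single_sum, sub_self]
  exact mem_support_iff.mp hd hco

section ALevel

lemma mA_eq_map : mA k q n = Ideal.map (Ideal.Quotient.mk ((m0 k q) ^ n)) (m0 k q) := by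
  rw [mA, Ideal.map_span, ← Set.range_comp]
  rfl

lemma mA_pow_eq_map (m : ℕ) :
    (mA k q n) ^ m = Ideal.map (Ideal.Quotient.mk ((m0 k q) ^ n)) ((m0 k q) ^ m) := by
  rw [mA_eq_map, Ideal.map_pow]

lemma mA_pow_n_eq_bot : (mA k q n) ^ n = ⊥ := by
  rw [mA_pow_eq_map, Ideal.map_quotient_self]

lemma xA_mem_mA (i : Fin q) : xA k q n i ∈ mA k q n :=
  Ideal.subset_span (Set.mem_range_self i)

lemma smul_mem_ideal {I : Ideal (Aqn k q n)} {a : Aqn k q n} (c : k) (h : a ∈ I) :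
    c • a ∈ I :=
  Submodule.smul_of_tower_mem I c h

lemma mk_sum_smul (c : Fin q → k) :
    Ideal.Quotient.mk ((m0 k q) ^ n) (∑ i, c i • X i) = ∑ i, c i • xA k q n i := by
  have : ∀ (p : MvPolynomial (Fin q) k),
      Ideal.Quotient.mk ((m0 k q) ^ n) p = Ideal.Quotient.mkₐ k ((m0 k q) ^ n) p :=
    fun p => rfl
  rw [this, map_sum]
  refine Finset.sum_congr rfl fun i _ => ?_
  rw [map_smul]
  rfl

lemma indep (hn : 2 ≤ n) {c : Fin q → k}
    (h : (∑ i, c i • xA k q n i) ∈ (mA k q n) ^ 2) : ∀ i, c i = 0 := by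
  rw [← mk_sum_smul, mA_pow_eq_map,
    Ideal.mem_map_iff_of_surjective _ Ideal.Quotient.mk_surjective] at h
  obtain ⟨t, ht, hteq⟩ := h
  have hker : t - (∑ i, c i • X i) ∈ (m0 k q) ^ n := (Ideal.Quotient.eq).mp hteq
  have hP : (∑ i, c i • X i) ∈ (m0 k q) ^ 2 := by
    have : (∑ i, c i • X i) = t - (t - ∑ i, c i • X i) := by ring
    rw [this]
    exact Ideal.sub_mem _ ht (Ideal.pow_le_pow_right hn hker)
  intro i
  have := coeff_eq_zero_of_mem_m0_sq hP (d := Finsupp.single i 1) (by rw [sum_single_one])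
  rwa [coeff_single_sum] at this

lemma decomp (hn : 2 ≤ n) {a : Aqn k q n} (ha : a ∈ mA k q n) :
    ∃ c : Fin q → k, a - ∑ i, c i • xA k q n i ∈ (mA k q n) ^ 2 := by
  rw [mA_eq_map, Ideal.mem_map_iff_of_surjective _ Ideal.Quotient.mk_surjective] at ha
  obtain ⟨p, hp, rfl⟩ := ha
  refine ⟨fun i => coeff (Finsupp.single i 1) p, ?_⟩
  rw [← mk_sum_smul, ← map_sub, mA_pow_eq_map]
  exact Ideal.mem_map_of_mem _ (sub_lin_mem hp)

lemma nontrivialA (hn : 2 ≤ n) : Nontrivial (Aqn k q n) := by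
  refine Ideal.Quotient.nontrivial_iff.mpr ?_
  intro htop
  have h1 : (1 : MvPolynomial (Fin q) k) ∈ (m0 k q) ^ n := htop ▸ Submodule.mem_top
  have h2 : (1 : MvPolynomial (Fin q) k) ∈ m0 k q :=
    Ideal.pow_le_self (by omega) h1
  have := mem_m0_iff.mp h2 0 (by simp)
  exact this rfl

lemma exists_const_add (a : Aqn k q n) :
    ∃ (c : k) (z : Aqn k q n), z ∈ mA k q n ∧ a = algebraMap k _ c + z := by
  obtain ⟨p, rfl⟩ := Ideal.Quotient.mk_surjective a
  refine ⟨constantCoeff p, Ideal.Quotient.mk _ (p - C (constantCoeff p)), ?_, ?_⟩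
  · rw [mA_eq_map]
    refine Ideal.mem_map_of_mem _ ?_
    rw [mem_m0_iff]
    intro d hd
    rintro rfl
    rw [mem_support_iff] at hd
    simp [coeff_sub, constantCoeff_eq] at hd
  · have : (Ideal.Quotient.mk ((m0 k q) ^ n)) (C (constantCoeff p)) =
        algebraMap k (Aqn k q n) (constantCoeff p) := rfl
    rw [← this, ← map_add]
    congr 1
    ring

lemma mem_mA_iff (hn : 2 ≤ n) {a : Aqn k q n} : a ∈ mA k q n ↔ ¬ IsUnit a := by
  have := nontrivialA (k := k) (q := q) hn
  constructor
  · intro ha hu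
    have hpow : a ^ n ∈ (mA k q n) ^ n := Ideal.pow_mem_pow ha n
    rw [mA_pow_n_eq_bot, Ideal.mem_bot] at hpow
    have : IsUnit ((0 : Aqn k q n)) := hpow ▸ hu.pow n
    rw [isUnit_zero_iff] at this
    exact zero_ne_one this
  · intro hu
    by_contra ha
    obtain ⟨c, z, hz, rfl⟩ := exists_const_add (k := k) (q := q) (n := n) a
    have hc : c ≠ 0 := by
      rintro rfl
      simp only [map_zero, zero_add] at ha
      exact ha hz
    have hznil : IsNilpotent z := by
      refine ⟨n, ?_⟩
      have := Ideal.pow_mem_pow hz n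
      rwa [mA_pow_n_eq_bot, Ideal.mem_bot] at this
    have hcu : IsUnit (algebraMap k (Aqn k q n) c) :=
      (IsUnit.map _ (isUnit_iff_ne_zero.mpr hc))
    refine hu ?_
    have h5 := hznil.isUnit_add_right_of_commute hcu (Commute.all _ _)
    rw [add_comm z] at h5
    exact h5

lemma equiv_mem_mA (hn : 2 ≤ n) (e : Aqn k q n ≃ₐ[k] Aqn k q n) {a : Aqn k q n}
    (ha : a ∈ mA k q n) : e a ∈ mA k q n := by
  rw [mem_mA_iff hn] at ha ⊢
  intro hu
  exact ha (by simpa using hu.map e.symm)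

lemma equiv_mem_mA_sq (hn : 2 ≤ n) (e : Aqn k q n ≃ₐ[k] Aqn k q n) {a : Aqn k q n}
    (ha : a ∈ (mA k q n) ^ 2) : e a ∈ (mA k q n) ^ 2 := by
  have h1 : Ideal.map (e : Aqn k q n →+* Aqn k q n) (mA k q n) ≤ mA k q n := by
    rw [mA, Ideal.map_span]
    rw [Ideal.span_le]
    rintro _ ⟨_, ⟨i, rfl⟩, rfl⟩
    exact equiv_mem_mA hn e (xA_mem_mA i)
  have h2 := Ideal.mem_map_of_mem (e : Aqn k q n →+* Aqn k q n) ha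
  rw [Ideal.map_pow] at h2
  exact Ideal.pow_right_mono h1 2 h2

end ALevel

section Lam

lemma lin_mem_m0 (M : Matrix (Fin q) (Fin q) k) (j : Fin q) :
    (∑ i, M i j • X i : MvPolynomial (Fin q) k) ∈ m0 k q :=
  Submodule.sum_mem _ fun i _ =>
    Submodule.smul_of_tower_mem _ _ (Ideal.subset_span (Set.mem_range_self i))

lemma aeval_lin_mem {L : Fin q → MvPolynomial (Fin q) k} (hL : ∀ j, L j ∈ m0 k q)
    {p : MvPolynomial (Fin q) k} (hp : p ∈ (m0 k q) ^ n) : aeval L p ∈ (m0 k q) ^ n := by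
  have h1 : Ideal.map ((aeval L : MvPolynomial (Fin q) k →ₐ[k] MvPolynomial (Fin q) k) :
      MvPolynomial (Fin q) k →+* MvPolynomial (Fin q) k) (m0 k q) ≤ m0 k q := by
    rw [m0, Ideal.map_span, Ideal.span_le]
    rintro _ ⟨_, ⟨i, rfl⟩, rfl⟩
    simpa using hL i
  have h2 := Ideal.mem_map_of_mem
    ((aeval L : MvPolynomial (Fin q) k →ₐ[k] MvPolynomial (Fin q) k) :
      MvPolynomial (Fin q) k →+* MvPolynomial (Fin q) k) hp
  rw [Ideal.map_pow] at h2
  exact Ideal.pow_right_mono h1 n h2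

/-- The algebra endomorphism of `A_{q,n}` induced by the linear substitution given by `M`. -/
def lam (k : Type) [Field k] (q n : ℕ) (M : Matrix (Fin q) (Fin q) k) :
    Aqn k q n →ₐ[k] Aqn k q n :=
  Ideal.Quotient.liftₐ ((m0 k q) ^ n)
    ((Ideal.Quotient.mkₐ k ((m0 k q) ^ n)).comp (aeval fun j => ∑ i, M i j • X i))
    (fun p hp => by
      have h := aeval_lin_mem (fun j => lin_mem_m0 M j) hp
      simpa [Ideal.Quotient.eq_zero_iff_mem] using h)

lemma lam_apply_x (M : Matrix (Fin q) (Fin q) k) (j : Fin q) :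
    lam k q n M (xA k q n j) = ∑ i, M i j • xA k q n i := by
  show Ideal.Quotient.liftₐ _ _ _ (Ideal.Quotient.mk _ (X j)) = _
  show (Ideal.Quotient.mkₐ k ((m0 k q) ^ n)) (aeval (fun j => ∑ i, M i j • X i) (X j)) = _
  rw [aeval_X]
  exact mk_sum_smul (fun i => M i j)

lemma algHomA_ext {f g : Aqn k q n →ₐ[k] Aqn k q n}
    (h : ∀ j, f (xA k q n j) = g (xA k q n j)) : f = g := by
  apply Ideal.Quotient.algHom_ext
  apply MvPolynomial.algHom_ext
  intro i
  simpa [xA] using h i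

lemma lam_comp (M N : Matrix (Fin q) (Fin q) k) :
    (lam k q n M).comp (lam k q n N) = lam k q n (M * N) := by
  apply algHomA_ext
  intro j
  rw [AlgHom.comp_apply, lam_apply_x, map_sum]
  simp only [map_smul, lam_apply_x, Finset.smul_sum, smul_smul]
  rw [Finset.sum_comm]
  refine Finset.sum_congr rfl fun l _ => ?_
  rw [← Finset.sum_smul, Matrix.mul_apply]
  congr 1
  exact Finset.sum_congr rfl fun i _ => mul_comm _ _

lemma lam_one : lam k q n (1 : Matrix (Fin q) (Fin q) k) = AlgHom.id k (Aqn k q n) := by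
  apply algHomA_ext
  intro j
  rw [lam_apply_x]
  simp [Matrix.one_apply, ite_smul]

end Lam

end Stmt14

section Main

open Stmt14 MvPolynomial

set_option maxHeartbeats 1600000

/-- every `k`-algebra automorphism `σ` of `A_{q,n}` factors uniquely as
`σ = λ ∘ τ`, where `λ` is a linear automorphism (each `λ(x_i)` lies in the span `Ω` of the
`x_j`'s) and `τ` is linearly trivial (`τ(x_i) - x_i ∈ m²` for all `i`). -/
theorem automorphism_unique_factorization (k : Type) [Field k] (q n : ℕ)
    (hq : 1 ≤ q) (hn : 2 ≤ n) (σ : Aqn k q n ≃ₐ[k] Aqn k q n) :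
    ∃! p : (Aqn k q n ≃ₐ[k] Aqn k q n) × (Aqn k q n ≃ₐ[k] Aqn k q n),
      (∀ i, p.1 (xA k q n i) ∈ OmegaA k q n) ∧
      (∀ i, p.2 (xA k q n i) - xA k q n i ∈ (mA k q n) ^ 2) ∧
      (∀ a : Aqn k q n, σ a = p.1 (p.2 a)) := by
  classical
  have hx : ∀ j, xA k q n j ∈ mA k q n := xA_mem_mA
  have hσ : ∀ j, σ (xA k q n j) ∈ mA k q n := fun j => equiv_mem_mA hn σ (hx j)
  have hσ' : ∀ j, σ.symm (xA k q n j) ∈ mA k q n := fun j => equiv_mem_mA hn σ.symm (hx j)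
  choose cM hcM using fun j => decomp hn (hσ j)
  choose cN hcN using fun j => decomp hn (hσ' j)
  set M : Matrix (Fin q) (Fin q) k := Matrix.of (fun i j => cM j i) with hMdef
  set N : Matrix (Fin q) (Fin q) k := Matrix.of (fun i j => cN j i) with hNdef
  have hM : ∀ j, σ (xA k q n j) - lam k q n M (xA k q n j) ∈ (mA k q n) ^ 2 := by
    intro j; rw [lam_apply_x]; exact hcM j
  have hN : ∀ j, σ.symm (xA k q n j) - lam k q n N (xA k q n j) ∈ (mA k q n) ^ 2 := by
    intro j; rw [lam_apply_x]; exact hcN j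
  have key : ∀ j, xA k q n j - lam k q n (M * N) (xA k q n j) ∈ (mA k q n) ^ 2 := by
    intro j
    have e1 : σ (σ.symm (xA k q n j) - lam k q n N (xA k q n j))
        = xA k q n j - σ (lam k q n N (xA k q n j)) := by
      rw [map_sub, AlgEquiv.apply_symm_apply]
    have e2 : σ (lam k q n N (xA k q n j)) = ∑ i, N i j • σ (xA k q n i) := by
      rw [lam_apply_x, map_sum]
      exact Finset.sum_congr rfl fun i _ => map_smul σ _ _
    have e3 : lam k q n M (lam k q n N (xA k q n j))
        = ∑ i, N i j • lam k q n M (xA k q n i) := by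
      rw [lam_apply_x, map_sum]
      exact Finset.sum_congr rfl fun i _ => map_smul _ _ _
    have e4 : lam k q n M (lam k q n N (xA k q n j)) = lam k q n (M * N) (xA k q n j) := by
      rw [← AlgHom.comp_apply, lam_comp]
    have iden : xA k q n j - lam k q n (M * N) (xA k q n j)
        = (∑ i, N i j • (σ (xA k q n i) - lam k q n M (xA k q n i)))
          + σ (σ.symm (xA k q n j) - lam k q n N (xA k q n j)) := by
      rw [e1, ← e4, e3]
      rw [show (∑ i, N i j • (σ (xA k q n i) - lam k q n M (xA k q n i)))
          = (∑ i, N i j • σ (xA k q n i)) - ∑ i, N i j • lam k q n M (xA k q n i) by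
        rw [← Finset.sum_sub_distrib]
        exact Finset.sum_congr rfl fun i _ => smul_sub _ _ _]
      rw [← e2]
      abel
    rw [iden]
    exact Submodule.add_mem _
      (Submodule.sum_mem _ fun i _ => smul_mem_ideal _ (hM i))
      (equiv_mem_mA_sq hn σ (hN j))
  have h1x : ∀ j, (∑ i, (1 : Matrix (Fin q) (Fin q) k) i j • xA k q n i) = xA k q n j := by
    intro j
    rw [← lam_apply_x, lam_one]
    rfl
  have hMN : M * N = 1 := by
    ext l j
    have hsum : (∑ i, ((1 : Matrix (Fin q) (Fin q) k) i j - (M * N) i j) • xA k q n i)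
        = xA k q n j - lam k q n (M * N) (xA k q n j) := by
      rw [show (∑ i, ((1 : Matrix (Fin q) (Fin q) k) i j - (M * N) i j) • xA k q n i)
          = (∑ i, (1 : Matrix (Fin q) (Fin q) k) i j • xA k q n i)
            - ∑ i, (M * N) i j • xA k q n i by
        rw [← Finset.sum_sub_distrib]
        exact Finset.sum_congr rfl fun i _ => sub_smul _ _ _]
      rw [h1x, lam_apply_x]
    have hz := indep hn (hsum ▸ key j) l
    exact (sub_eq_zero.mp hz).symm
  have hNM : N * M = 1 := mul_eq_one_comm.mp hMN
  let lamE : Aqn k q n ≃ₐ[k] Aqn k q n :=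
    AlgEquiv.ofAlgHom (lam k q n M) (lam k q n N)
      (by rw [lam_comp, hMN, lam_one]) (by rw [lam_comp, hNM, lam_one])
  have lamE_apply : ∀ a, lamE a = lam k q n M a := fun a => rfl
  have lamE_symm_apply : ∀ a, lamE.symm a = lam k q n N a := fun a => rfl
  set τ : Aqn k q n ≃ₐ[k] Aqn k q n := σ.trans lamE.symm with hτdef
  refine ⟨(lamE, τ), ⟨?_, ?_, ?_⟩, ?_⟩
  · intro i
    rw [lamE_apply, lam_apply_x]
    exact Submodule.sum_mem _ fun l _ =>
      Submodule.smul_mem _ _ (Submodule.subset_span (Set.mem_range_self l))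
  · intro j
    have hid : τ (xA k q n j) - xA k q n j
        = lamE.symm (σ (xA k q n j) - lam k q n M (xA k q n j)) := by
      rw [map_sub]
      have h5 : τ (xA k q n j) = lamE.symm (σ (xA k q n j)) := rfl
      rw [h5]
      congr 1
      have h6 : lam k q n M (xA k q n j) = lamE (xA k q n j) := rfl
      rw [h6, AlgEquiv.symm_apply_apply]
    rw [hid]
    exact equiv_mem_mA_sq hn lamE.symm (hM j)
  · intro a
    show σ a = lamE (lamE.symm (σ a))
    rw [AlgEquiv.apply_symm_apply]
  · rintro ⟨lam', τ'⟩ ⟨h1, h2, h3⟩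
    have hLamx : ∀ j, lam' (xA k q n j) = lamE (xA k q n j) := by
      intro j
      have h1' := h1 j
      rw [OmegaA] at h1'
      obtain ⟨c, hc⟩ := (Submodule.mem_span_range_iff_exists_fun k).mp h1'
      have hmem : lam' (xA k q n j) - lam k q n M (xA k q n j) ∈ (mA k q n) ^ 2 := by
        have hid : lam' (xA k q n j) - lam k q n M (xA k q n j)
            = (σ (xA k q n j) - lam k q n M (xA k q n j))
              - lam' (τ' (xA k q n j) - xA k q n j) := by
          rw [map_sub, ← h3 (xA k q n j)]
          abel
        rw [hid]
        exact Submodule.sub_mem _ (hM j) (equiv_mem_mA_sq hn lam' (h2 j))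
      have hsum2 : lam' (xA k q n j) - lam k q n M (xA k q n j)
          = ∑ i, (c i - M i j) • xA k q n i := by
        rw [← hc, lam_apply_x, ← Finset.sum_sub_distrib]
        exact Finset.sum_congr rfl fun i _ => (sub_smul _ _ _).symm
      have hz := indep hn (hsum2 ▸ hmem)
      have hc' : ∀ i, c i = M i j := fun i => sub_eq_zero.mp (hz i)
      rw [← hc, lamE_apply, lam_apply_x]
      exact Finset.sum_congr rfl fun i _ => by rw [hc' i]
    have hLam : lam' = lamE := by
      have hhom : (lam' : Aqn k q n →ₐ[k] Aqn k q n) = (lamE : Aqn k q n →ₐ[k] Aqn k q n) :=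
        algHomA_ext fun j => by simpa using hLamx j
      apply AlgEquiv.ext
      intro a
      exact DFunLike.congr_fun hhom a
    have hτ' : τ' = τ := by
      apply AlgEquiv.ext
      intro a
      apply lamE.injective
      have h7 : lamE (τ a) = σ a := by
        show lamE (lamE.symm (σ a)) = σ a
        rw [AlgEquiv.apply_symm_apply]
      rw [h7, ← hLam, ← h3 a]
    exact Prod.ext hLam hτ'

end Main
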